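/- Let h₁, h₂, h₃ : ℝ → ℝ be twice differentiable and nowhere zero, let F₁, F₂, F₃ : ℝ → ℝ and T̃₀ : ℝ → ℝ be functions, and let λ = (λ₁,λ₂,λ₃) ∈ ℝ³. Define the potential V(t,x) = Σ_{a=1}^{3} F_a(x_a/h_a(t))·h_a(t)⁻² + T̃₀(t) − (1/4) Σ_{a=1}^{3} (ḧ_a(t)/h_a(t))·x_a². Suppose φ₀ : ℝ → ℂ is differentiable and satisfies i·φ₀′(t) = ( T̃₀(t) − (i/2) Σ_{a=1}^{3} ḣ_a(t)/h_a(t) − Σ_{a=1}^{3} λ_a h_a(t)⁻² )·φ₀(t) for all t, and φ₁, φ₂, φ₃ : ℝ → ℂ are twice differentiable and satisfy φ_a″(ω) = ( F_a(ω) + λ_a )·φ_a(ω) for all ω ∈ ℝ and a = 1,2,3. Then the separated function ψ(t,x) = exp( (i/4) Σ_{a=1}^{3} (ḣ_a(t)/h_a(t))·x_a² ) · φ₀(t) · φ₁(x₁/h₁(t)) · φ₂(x₂/h₂(t)) · φ₃(x₃/h₃(t)) satisfies the Schrödinger equation i·∂ψ/∂t (t,x) + Δψ(t,x) − V(t,x)·ψ(t,x)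 = 0 for all (t,x) ∈ ℝ × ℝ³, where Δψ = Σ_{a=1}^{3} ∂²ψ/∂x_a². -/

import Mathlib

open scoped BigOperators

section AuxSchrodinger
open Complex

lemma aux1 (c hh : ℝ) (φ : ℝ → ℂ) (h1 : Differentiable ℝ φ) (u : ℝ) :
    HasDerivAt (fun u : ℝ => Complex.exp (Complex.I/4 * ((c*u^2 : ℝ):ℂ)) * φ (u/hh))
      (Complex.exp (Complex.I/4 * ((c*u^2 : ℝ):ℂ)) *
        ((Complex.I*c*u/2) * φ (u/hh) + ((hh:ℂ))⁻¹ * deriv φ (u/hh))) u := by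
  have h0 : HasDerivAt (fun u : ℝ => c*u^2) (c*(2*u)) u := by
    simpa [mul_comm] using ((hasDerivAt_pow 2 u).const_mul c)
  have hE : HasDerivAt (fun u : ℝ => Complex.exp (Complex.I/4 * ((c*u^2 : ℝ):ℂ)))
      (Complex.exp (Complex.I/4 * ((c*u^2:ℝ):ℂ)) * (Complex.I/4 * ((c*(2*u) : ℝ):ℂ))) u := by
    exact ((h0.ofReal_comp).const_mul (Complex.I/4)).cexp
  have hg : HasDerivAt (fun u : ℝ => u/hh) (1/hh) u := (hasDerivAt_id u).div_const hh
  have hφ' : HasDerivAt (fun u : ℝ => φ (u/hh)) ((1/hh : ℝ) • deriv φ (u/hh)) u :=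
    ((h1 (u/hh)).hasDerivAt).scomp u hg
  refine (hE.fun_mul hφ').congr_deriv ?_
  simp only [Complex.real_smul]
  push_cast
  ring

lemma aux2 (c hh : ℝ) (φ : ℝ → ℂ) (h1 : Differentiable ℝ φ) (h2 : Differentiable ℝ (deriv φ)) (u : ℝ) :
    HasDerivAt (fun u : ℝ => Complex.exp (Complex.I/4 * ((c*u^2 : ℝ):ℂ)) *
        ((Complex.I*c*u/2) * φ (u/hh) + ((hh:ℂ))⁻¹ * deriv φ (u/hh)))
      (Complex.exp (Complex.I/4 * ((c*u^2 : ℝ):ℂ)) *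
        ((Complex.I*c/2 - (c:ℂ)^2*u^2/4) * φ (u/hh)
          + (Complex.I*c*u/(hh:ℂ)) * deriv φ (u/hh)
          + (((hh:ℂ))^2)⁻¹ * deriv (deriv φ) (u/hh))) u := by
  have h0 : HasDerivAt (fun u : ℝ => c*u^2) (c*(2*u)) u := by
    simpa [mul_comm] using ((hasDerivAt_pow 2 u).const_mul c)
  have hE : HasDerivAt (fun u : ℝ => Complex.exp (Complex.I/4 * ((c*u^2 : ℝ):ℂ)))
      (Complex.exp (Complex.I/4 * ((c*u^2:ℝ):ℂ)) * (Complex.I/4 * ((c*(2*u) : ℝ):ℂ))) u :=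
    ((h0.ofReal_comp).const_mul (Complex.I/4)).cexp
  have hg : HasDerivAt (fun u : ℝ => u/hh) (1/hh) u := (hasDerivAt_id u).div_const hh
  have hφ' : HasDerivAt (fun u : ℝ => φ (u/hh)) ((1/hh : ℝ) • deriv φ (u/hh)) u :=
    ((h1 (u/hh)).hasDerivAt).scomp u hg
  have hq' : HasDerivAt (fun u : ℝ => deriv φ (u/hh)) ((1/hh : ℝ) • deriv (deriv φ) (u/hh)) u :=
    ((h2 (u/hh)).hasDerivAt).scomp (h := fun u : ℝ => u/hh) u hg
  have hlin : HasDerivAt (fun u : ℝ => Complex.I*c*u/2) (Complex.I*c/2) u := by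
    have := (((hasDerivAt_id u).ofReal_comp).const_mul (Complex.I*c)).div_const 2
    simpa using this
  have hW : HasDerivAt (fun u : ℝ => (Complex.I*c*u/2) * φ (u/hh) + ((hh:ℂ))⁻¹ * deriv φ (u/hh))
      ((Complex.I*c/2) * φ (u/hh) + (Complex.I*c*u/2) * ((1/hh : ℝ) • deriv φ (u/hh))
        + ((hh:ℂ))⁻¹ * ((1/hh : ℝ) • deriv (deriv φ) (u/hh))) u :=
    (hlin.mul hφ').add (hq'.const_mul _)
  refine (hE.fun_mul hW).congr_deriv ?_
  simp only [Complex.real_smul]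
  push_cast
  have hI := Complex.I_sq
  by_cases hhz : hh = 0
  · subst hhz; push_cast; ring_nf; simp [Complex.I_sq]; ring_nf
  · field_simp
    ring_nf
    simp only [Complex.I_sq]
    ring_nf

lemma aux3 (K : ℂ) (c hh : ℝ) (φ : ℝ → ℂ) (h1 : Differentiable ℝ φ)
    (h2 : Differentiable ℝ (deriv φ)) (r : ℝ) :
    deriv (fun s => deriv (fun u : ℝ => K * (Complex.exp (Complex.I/4 * ((c*u^2 : ℝ):ℂ)) * φ (u/hh))) s) r
    = K * (Complex.exp (Complex.I/4 * ((c*r^2 : ℝ):ℂ)) *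
        ((Complex.I*c/2 - (c:ℂ)^2*r^2/4) * φ (r/hh)
          + (Complex.I*c*r/(hh:ℂ)) * deriv φ (r/hh)
          + (((hh:ℂ))^2)⁻¹ * deriv (deriv φ) (r/hh))) := by
  have hin : (fun s => deriv (fun u : ℝ => K * (Complex.exp (Complex.I/4 * ((c*u^2 : ℝ):ℂ)) * φ (u/hh))) s)
      = fun s => K * (Complex.exp (Complex.I/4 * ((c*s^2 : ℝ):ℂ)) *
          ((Complex.I*c*s/2) * φ (s/hh) + ((hh:ℂ))⁻¹ * deriv φ (s/hh))) := by
    funext s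
    exact ((aux1 c hh φ h1 s).const_mul K).deriv
  rw [hin]
  exact ((aux2 c hh φ h1 h2 r).const_mul K).deriv

lemma exps (z a b c : ℂ) : Complex.exp (z*(a+b+c)) = Complex.exp (z*a) * Complex.exp (z*b) * Complex.exp (z*c) := by
  rw [← Complex.exp_add, ← Complex.exp_add]; ring_nf


end AuxSchrodinger

set_option maxHeartbeats 2000000 in
/-- Separation of variables in the Schrödinger equation with vanishing magnetic field in
the time-rescaled Cartesian coordinates `ω_a = x_a / h_a(t)`: if the factors `φ₀, φ₁, φ₂, φ₃`
satisfy the separation ODEs, then the separated function `ψ` satisfies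
`i ∂ψ/∂t + Δψ − V ψ = 0`. -/
theorem schrodinger_separation_cartesian
    (h : Fin 3 → ℝ → ℝ)
    (hhd : ∀ a, Differentiable ℝ (h a))
    (hhd2 : ∀ a, Differentiable ℝ (deriv (h a)))
    (hhne : ∀ a t, h a t ≠ 0)
    (F : Fin 3 → ℝ → ℝ) (T₀ : ℝ → ℝ) (lam : Fin 3 → ℝ)
    (V : ℝ → (Fin 3 → ℝ) → ℝ)
    (hV : V = fun t x =>
      ∑ a : Fin 3, F a (x a / h a t) / (h a t) ^ 2 + T₀ t
        - (1 / 4) * ∑ a : Fin 3, (deriv (deriv (h a)) t / h a t) * (x a) ^ 2)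
    (φ₀ : ℝ → ℂ) (hφ₀d : Differentiable ℝ φ₀)
    (hφ₀ : ∀ t : ℝ, Complex.I * deriv φ₀ t =
      (((T₀ t : ℝ) : ℂ)
        - Complex.I / 2 * ((∑ a : Fin 3, deriv (h a) t / h a t : ℝ) : ℂ)
        - ((∑ a : Fin 3, lam a / (h a t) ^ 2 : ℝ) : ℂ)) * φ₀ t)
    (φ : Fin 3 → ℝ → ℂ)
    (hφd : ∀ a, Differentiable ℝ (φ a))
    (hφd2 : ∀ a, Differentiable ℝ (deriv (φ a)))
    (hφ : ∀ (a : Fin 3) (ω : ℝ), deriv (deriv (φ a)) ω =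
      (((F a ω : ℝ) : ℂ) + ((lam a : ℝ) : ℂ)) * φ a ω)
    (ψ : ℝ → (Fin 3 → ℝ) → ℂ)
    (hψ : ψ = fun t x =>
      Complex.exp (Complex.I / 4 *
          ((∑ a : Fin 3, (deriv (h a) t / h a t) * (x a) ^ 2 : ℝ) : ℂ))
        * φ₀ t * ∏ a : Fin 3, φ a (x a / h a t)) :
    ∀ (t : ℝ) (x : Fin 3 → ℝ),
      Complex.I * deriv (fun s => ψ s x) t
        + ∑ a : Fin 3,
            deriv (fun s => deriv (fun r => ψ t (Function.update x a r)) s) (x a)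
        - ((V t x : ℝ) : ℂ) * ψ t x = 0 := by
  intro t x
  simp only [hψ, hV, Fin.sum_univ_three, Fin.prod_univ_three, Function.update_self,
    Function.update_of_ne (show (1:Fin 3) ≠ 0 by decide),
    Function.update_of_ne (show (2:Fin 3) ≠ 0 by decide),
    Function.update_of_ne (show (0:Fin 3) ≠ 1 by decide),
    Function.update_of_ne (show (2:Fin 3) ≠ 1 by decide),
    Function.update_of_ne (show (0:Fin 3) ≠ 2 by decide),
    Function.update_of_ne (show (1:Fin 3) ≠ 2 by decide)]
  -- abbreviations
  -- spatial rewrites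
  have e0 : (fun r : ℝ =>
      Complex.exp (Complex.I / 4 *
        ((deriv (h 0) t / h 0 t * r ^ 2 + deriv (h 1) t / h 1 t * x 1 ^ 2 +
            deriv (h 2) t / h 2 t * x 2 ^ 2 : ℝ) : ℂ)) *
        φ₀ t * (φ 0 (r / h 0 t) * φ 1 (x 1 / h 1 t) * φ 2 (x 2 / h 2 t)))
      = fun u : ℝ => (Complex.exp (Complex.I/4 * ((deriv (h 1) t / h 1 t * x 1 ^ 2 : ℝ):ℂ)) *
          Complex.exp (Complex.I/4 * ((deriv (h 2) t / h 2 t * x 2 ^ 2 : ℝ):ℂ)) *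
          φ₀ t * (φ 1 (x 1 / h 1 t) * φ 2 (x 2 / h 2 t))) *
          (Complex.exp (Complex.I/4 * ((deriv (h 0) t / h 0 t * u ^ 2 : ℝ):ℂ)) * φ 0 (u / h 0 t)) := by
    funext u; push_cast; rw [exps]; ring
  have e1 : (fun r : ℝ =>
      Complex.exp (Complex.I / 4 *
        ((deriv (h 0) t / h 0 t * x 0 ^ 2 + deriv (h 1) t / h 1 t * r ^ 2 +
            deriv (h 2) t / h 2 t * x 2 ^ 2 : ℝ) : ℂ)) *
        φ₀ t * (φ 0 (x 0 / h 0 t) * φ 1 (r / h 1 t) * φ 2 (x 2 / h 2 t)))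
      = fun u : ℝ => (Complex.exp (Complex.I/4 * ((deriv (h 0) t / h 0 t * x 0 ^ 2 : ℝ):ℂ)) *
          Complex.exp (Complex.I/4 * ((deriv (h 2) t / h 2 t * x 2 ^ 2 : ℝ):ℂ)) *
          φ₀ t * (φ 0 (x 0 / h 0 t) * φ 2 (x 2 / h 2 t))) *
          (Complex.exp (Complex.I/4 * ((deriv (h 1) t / h 1 t * u ^ 2 : ℝ):ℂ)) * φ 1 (u / h 1 t)) := by
    funext u; push_cast; rw [exps]; ring
  have e2 : (fun r : ℝ =>
      Complex.exp (Complex.I / 4 *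
        ((deriv (h 0) t / h 0 t * x 0 ^ 2 + deriv (h 1) t / h 1 t * x 1 ^ 2 +
            deriv (h 2) t / h 2 t * r ^ 2 : ℝ) : ℂ)) *
        φ₀ t * (φ 0 (x 0 / h 0 t) * φ 1 (x 1 / h 1 t) * φ 2 (r / h 2 t)))
      = fun u : ℝ => (Complex.exp (Complex.I/4 * ((deriv (h 0) t / h 0 t * x 0 ^ 2 : ℝ):ℂ)) *
          Complex.exp (Complex.I/4 * ((deriv (h 1) t / h 1 t * x 1 ^ 2 : ℝ):ℂ)) *
          φ₀ t * (φ 0 (x 0 / h 0 t) * φ 1 (x 1 / h 1 t))) *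
          (Complex.exp (Complex.I/4 * ((deriv (h 2) t / h 2 t * u ^ 2 : ℝ):ℂ)) * φ 2 (u / h 2 t)) := by
    funext u; push_cast; rw [exps]; ring
  simp only [e0, e1, e2]
  rw [aux3 _ (deriv (h 0) t / h 0 t) (h 0 t) (φ 0) (hφd 0) (hφd2 0) (x 0),
      aux3 _ (deriv (h 1) t / h 1 t) (h 1 t) (φ 1) (hφd 1) (hφd2 1) (x 1),
      aux3 _ (deriv (h 2) t / h 2 t) (h 2 t) (φ 2) (hφd 2) (hφd2 2) (x 2)]
  -- time derivative
  have hc : ∀ a : Fin 3, HasDerivAt (fun s => deriv (h a) s / h a s)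
      ((deriv (deriv (h a)) t * h a t - deriv (h a) t * deriv (h a) t) / h a t ^ 2) t :=
    fun a => ((hhd2 a t).hasDerivAt).div ((hhd a t).hasDerivAt) (hhne a t)
  have hsum : HasDerivAt (fun s => deriv (h 0) s / h 0 s * x 0 ^ 2 + deriv (h 1) s / h 1 s * x 1 ^ 2 +
      deriv (h 2) s / h 2 s * x 2 ^ 2)
      ((deriv (deriv (h 0)) t * h 0 t - deriv (h 0) t * deriv (h 0) t) / h 0 t ^ 2 * x 0 ^ 2 +
       (deriv (deriv (h 1)) t * h 1 t - deriv (h 1) t * deriv (h 1) t) / h 1 t ^ 2 * x 1 ^ 2 +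
       (deriv (deriv (h 2)) t * h 2 t - deriv (h 2) t * deriv (h 2) t) / h 2 t ^ 2 * x 2 ^ 2) t :=
    (((hc 0).mul_const _).add ((hc 1).mul_const _)).add ((hc 2).mul_const _)
  have hE : HasDerivAt (fun s => Complex.exp (Complex.I / 4 *
        ((deriv (h 0) s / h 0 s * x 0 ^ 2 + deriv (h 1) s / h 1 s * x 1 ^ 2 +
          deriv (h 2) s / h 2 s * x 2 ^ 2 : ℝ) : ℂ)))
      (Complex.exp (Complex.I / 4 *
        ((deriv (h 0) t / h 0 t * x 0 ^ 2 + deriv (h 1) t / h 1 t * x 1 ^ 2 +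
          deriv (h 2) t / h 2 t * x 2 ^ 2 : ℝ) : ℂ)) * (Complex.I / 4 *
        (((deriv (deriv (h 0)) t * h 0 t - deriv (h 0) t * deriv (h 0) t) / h 0 t ^ 2 * x 0 ^ 2 +
         (deriv (deriv (h 1)) t * h 1 t - deriv (h 1) t * deriv (h 1) t) / h 1 t ^ 2 * x 1 ^ 2 +
         (deriv (deriv (h 2)) t * h 2 t - deriv (h 2) t * deriv (h 2) t) / h 2 t ^ 2 * x 2 ^ 2 : ℝ) : ℂ))) t :=
    ((hsum.ofReal_comp).const_mul (Complex.I/4)).cexp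
  have hP : ∀ a : Fin 3, HasDerivAt (fun s => φ a (x a / h a s))
      (((0 * h a t - x a * deriv (h a) t) / h a t ^ 2 : ℝ) • deriv (φ a) (x a / h a t)) t :=
    fun a => ((hφd a (x a / h a t)).hasDerivAt).scomp t
      ((hasDerivAt_const t (x a)).div ((hhd a t).hasDerivAt) (hhne a t))
  have hT := (hE.fun_mul ((hφ₀d t).hasDerivAt)).fun_mul (((hP 0).fun_mul (hP 1)).fun_mul (hP 2))
  rw [hT.deriv]
  have hD : deriv φ₀ t = (-Complex.I) * ((((T₀ t : ℝ) : ℂ)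
        - Complex.I / 2 * ((∑ a : Fin 3, deriv (h a) t / h a t : ℝ) : ℂ)
        - ((∑ a : Fin 3, lam a / (h a t) ^ 2 : ℝ) : ℂ)) * φ₀ t) := by
    have h1 := hφ₀ t
    have h2 : (-Complex.I) * (Complex.I * deriv φ₀ t) = deriv φ₀ t := by
      rw [← mul_assoc, neg_mul, Complex.I_mul_I]; ring
    rw [← h2, h1]
  rw [hD]
  have hsplit : Complex.exp (Complex.I / 4 *
      ((deriv (h 0) t / h 0 t * x 0 ^ 2 + deriv (h 1) t / h 1 t * x 1 ^ 2 +
        deriv (h 2) t / h 2 t * x 2 ^ 2 : ℝ) : ℂ))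
      = Complex.exp (Complex.I/4 * ((deriv (h 0) t / h 0 t * x 0 ^ 2 : ℝ):ℂ)) *
        Complex.exp (Complex.I/4 * ((deriv (h 1) t / h 1 t * x 1 ^ 2 : ℝ):ℂ)) *
        Complex.exp (Complex.I/4 * ((deriv (h 2) t / h 2 t * x 2 ^ 2 : ℝ):ℂ)) := by
    push_cast; rw [exps]
  rw [hsplit]
  simp only [hφ, Fin.sum_univ_three, Complex.real_smul]
  have hb0 : (deriv (deriv (h 0)) t * h 0 t - deriv (h 0) t * deriv (h 0) t) / h 0 t ^ 2
      = deriv (deriv (h 0)) t / h 0 t - (deriv (h 0) t / h 0 t)^2 := by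
    field_simp [hhne 0 t]
  have hb1 : (deriv (deriv (h 1)) t * h 1 t - deriv (h 1) t * deriv (h 1) t) / h 1 t ^ 2
      = deriv (deriv (h 1)) t / h 1 t - (deriv (h 1) t / h 1 t)^2 := by
    field_simp [hhne 1 t]
  have hb2 : (deriv (deriv (h 2)) t * h 2 t - deriv (h 2) t * deriv (h 2) t) / h 2 t ^ 2
      = deriv (deriv (h 2)) t / h 2 t - (deriv (h 2) t / h 2 t)^2 := by
    field_simp [hhne 2 t]
  rw [hb0, hb1, hb2]
  have hne0 : ((h 0 t : ℂ)) ≠ 0 := Complex.ofReal_ne_zero.mpr (hhne 0 t)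
  have hne1 : ((h 1 t : ℂ)) ≠ 0 := Complex.ofReal_ne_zero.mpr (hhne 1 t)
  have hne2 : ((h 2 t : ℂ)) ≠ 0 := Complex.ofReal_ne_zero.mpr (hhne 2 t)
  push_cast
  set H0 := ((h 0 t : ℝ) : ℂ) with hH0
  set H1 := ((h 1 t : ℝ) : ℂ) with hH1
  set H2 := ((h 2 t : ℝ) : ℂ) with hH2
  set D0 := ((deriv (h 0) t : ℝ) : ℂ) with hD0
  set D1 := ((deriv (h 1) t : ℝ) : ℂ) with hD1
  set D2 := ((deriv (h 2) t : ℝ) : ℂ) with hD2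
  set B0 := ((deriv (deriv (h 0)) t : ℝ) : ℂ) with hB0
  set B1 := ((deriv (deriv (h 1)) t : ℝ) : ℂ) with hB1
  set B2 := ((deriv (deriv (h 2)) t : ℝ) : ℂ) with hB2
  set X0 := ((x 0 : ℝ) : ℂ) with hX0
  set X1 := ((x 1 : ℝ) : ℂ) with hX1
  set X2 := ((x 2 : ℝ) : ℂ) with hX2
  set p0 := φ 0 (x 0 / h 0 t) with hp0
  set p1 := φ 1 (x 1 / h 1 t) with hp1
  set p2 := φ 2 (x 2 / h 2 t) with hp2
  set q0 := deriv (φ 0) (x 0 / h 0 t) with hq0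
  set q1 := deriv (φ 1) (x 1 / h 1 t) with hq1
  set q2 := deriv (φ 2) (x 2 / h 2 t) with hq2
  set z := φ₀ t with hz
  set E0 := Complex.exp (Complex.I / 4 * (D0 / H0 * X0 ^ 2)) with hE0
  set E1 := Complex.exp (Complex.I / 4 * (D1 / H1 * X1 ^ 2)) with hE1
  set E2 := Complex.exp (Complex.I / 4 * (D2 / H2 * X2 ^ 2)) with hE2
  linear_combination (E0*E1*E2*z*(p0*p1*p2) *
    ((1/4)*((B0/H0 - (D0/H0)^2)*X0^2 + (B1/H1 - (D1/H1)^2)*X1^2 + (B2/H2 - (D2/H2)^2)*X2^2)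
      - ((T₀ t : ℝ):ℂ) + ((lam 0:ℝ):ℂ)/H0^2 + ((lam 1:ℝ):ℂ)/H1^2 + ((lam 2:ℝ):ℂ)/H2^2
      + Complex.I/2*(D0/H0 + D1/H1 + D2/H2))) * Complex.I_sq
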